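/- Let a : ℕ → ℝ with a(0) = 1. Define D^a_n := n! * ∑_{m=0}^{n} (-1)^m a(m)/m!, the probabilistic derangement polynomial D^a_n(x) := ∑_{l=0}^{n} C(n,l) D^a_l x^{n-l}, and μ_n(x) := ∑_{j=0}^{n} C(n,j)(-1)^j a(j) x^{n-j}. Then for all n ≥ 1 and all real x: D^a_n(x) - n * D^a_{n-1}(x) = μ_n(x). -/
import Mathlib

open Finset

lemma sum_split (f : ℕ → ℝ) (m : ℕ) (x : ℝ) :
    ∑ l ∈ range (m+3), (((m+2).choose l : ℕ) : ℝ) * f l * x ^ (m+2-l)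
    = x * (∑ l ∈ range (m+2), (((m+1).choose l : ℕ) : ℝ) * f l * x ^ (m+1-l))
      + ∑ k ∈ range (m+2), (((m+1).choose k : ℕ) : ℝ) * f (k+1) * x ^ (m+1-k) := by
  have h1 : ∑ l ∈ range (m+3), (((m+2).choose l : ℕ) : ℝ) * f l * x ^ (m+2-l)
      = (∑ k ∈ range (m+2), (((m+2).choose (k+1) : ℕ) : ℝ) * f (k+1) * x ^ (m+1-k))
        + f 0 * x ^ (m+2) := by
    rw [Finset.sum_range_succ' _ (m+2)]
    simp [Nat.succ_sub_succ]
  have h3 : ∑ k ∈ range (m+3), (((m+1).choose k : ℕ) : ℝ) * f k * x ^ (m+2-k)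
      = (∑ k ∈ range (m+2), (((m+1).choose (k+1) : ℕ) : ℝ) * f (k+1) * x ^ (m+1-k))
        + f 0 * x ^ (m+2) := by
    rw [Finset.sum_range_succ' _ (m+2)]
    simp [Nat.succ_sub_succ]
  have h4 : ∑ k ∈ range (m+3), (((m+1).choose k : ℕ) : ℝ) * f k * x ^ (m+2-k)
      = x * (∑ l ∈ range (m+2), (((m+1).choose l : ℕ) : ℝ) * f l * x ^ (m+1-l)) := by
    rw [Finset.sum_range_succ, Nat.choose_succ_self]
    simp only [Nat.cast_zero, zero_mul, add_zero]
    rw [Finset.mul_sum]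
    apply Finset.sum_congr rfl
    intro l hl
    have hle : l ≤ m + 1 := Nat.lt_succ_iff.mp (Finset.mem_range.mp hl)
    have he : m + 2 - l = (m + 1 - l) + 1 := by omega
    rw [he, pow_succ]
    ring
  have h2 : x * (∑ l ∈ range (m+2), (((m+1).choose l : ℕ) : ℝ) * f l * x ^ (m+1-l))
      = (∑ k ∈ range (m+2), (((m+1).choose (k+1) : ℕ) : ℝ) * f (k+1) * x ^ (m+1-k))
        + f 0 * x ^ (m+2) := h4 ▸ h3
  have hsum : ∑ k ∈ range (m+2), (((m+2).choose (k+1) : ℕ) : ℝ) * f (k+1) * x ^ (m+1-k)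
      = (∑ k ∈ range (m+2), (((m+1).choose (k+1) : ℕ) : ℝ) * f (k+1) * x ^ (m+1-k))
        + ∑ k ∈ range (m+2), (((m+1).choose k : ℕ) : ℝ) * f (k+1) * x ^ (m+1-k) := by
    rw [← Finset.sum_add_distrib]
    apply Finset.sum_congr rfl
    intro k _
    rw [show (m+2).choose (k+1) = (m+1).choose k + (m+1).choose (k+1) from Nat.choose_succ_succ _ _]
    push_cast
    ring
  rw [h1, h2]
  linarith [hsum]

lemma sum_factor (f : ℕ → ℝ) (m : ℕ) (x : ℝ) :
    ∑ k ∈ range (m+2), ((m+1-k : ℕ) : ℝ) * (((m+1).choose k : ℕ) : ℝ) * f k * x ^ (m+1-k)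
    = ((m+1 : ℕ) : ℝ) * (x * ∑ k ∈ range (m+1), ((m.choose k : ℕ) : ℝ) * f k * x ^ (m-k)) := by
  rw [Finset.sum_range_succ]
  simp only [Nat.sub_self, Nat.cast_zero, zero_mul, add_zero]
  rw [Finset.mul_sum, Finset.mul_sum]
  apply Finset.sum_congr rfl
  intro k hk
  have hle : k ≤ m := Nat.lt_succ_iff.mp (Finset.mem_range.mp hk)
  have hc : (m.choose k) * (m + 1) = (m+1).choose k * (m + 1 - k) := Nat.choose_mul_succ_eq m k
  have hc' : ((m.choose k : ℕ) : ℝ) * ((m+1 : ℕ) : ℝ) = (((m+1).choose k : ℕ) : ℝ) * ((m+1-k : ℕ) : ℝ) := by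
    exact_mod_cast congrArg (Nat.cast : ℕ → ℝ) hc
  have he : m + 1 - k = (m - k) + 1 := by omega
  rw [he] at hc' ⊢
  rw [pow_succ]
  linear_combination (-(f k * x ^ (m-k) * x)) * hc'

theorem stmt_4 (a : ℕ → ℝ) (ha : a 0 = 1)
    (D : ℕ → ℝ)
    (hD : ∀ n, D n = (n.factorial : ℝ) *
      ∑ m ∈ Finset.range (n + 1), (-1 : ℝ) ^ m * a m / m.factorial)
    (Dp : ℕ → ℝ → ℝ)
    (hDp : ∀ n x, Dp n x = ∑ l ∈ Finset.range (n + 1), (n.choose l : ℝ) * D l * x ^ (n - l))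
    (μ : ℕ → ℝ → ℝ)
    (hμ : ∀ n x, μ n x = ∑ j ∈ Finset.range (n + 1),
      (n.choose j : ℝ) * (-1 : ℝ) ^ j * a j * x ^ (n - j))
    (n : ℕ) (hn : 1 ≤ n) (x : ℝ) :
    Dp n x - n * Dp (n - 1) x = μ n x := by
  have hrec : ∀ k : ℕ, D (k+1) = ((k+1 : ℕ) : ℝ) * D k + (-1 : ℝ)^(k+1) * a (k+1) := by
    intro k
    rw [hD (k+1), hD k, Finset.sum_range_succ]
    have hne : ((k+1).factorial : ℝ) ≠ 0 := Nat.cast_ne_zero.mpr (Nat.factorial_ne_zero _)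
    have hfk : (((k+1).factorial : ℕ) : ℝ) = ((k+1:ℕ):ℝ) * ((k.factorial : ℕ) : ℝ) := by
      rw [Nat.factorial_succ]; push_cast; ring
    rw [mul_add, mul_div_cancel₀ _ hne, hfk]
    ring
  obtain ⟨m, rfl⟩ : ∃ m, n = m + 1 := ⟨n - 1, by omega⟩
  simp only [Nat.add_sub_cancel]
  clear hn
  induction m generalizing x with
  | zero =>
    simp [hDp, hμ, hD, Finset.sum_range_succ, ha]
    ring
  | succ m ih =>
    have e1 : Dp (m+2) x = x * Dp (m+1) x
        + ∑ k ∈ range (m+2), (((m+1).choose k : ℕ):ℝ) * D (k+1) * x^(m+1-k) := by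
      rw [hDp, hDp]
      exact sum_split D m x
    have e2 : μ (m+2) x = x * μ (m+1) x
        + ∑ k ∈ range (m+2), (((m+1).choose k : ℕ):ℝ) * (-1:ℝ)^(k+1) * a (k+1) * x^(m+1-k) := by
      rw [hμ, hμ]
      have h := sum_split (fun j => (-1:ℝ)^j * a j) m x
      simp only [← mul_assoc] at h
      exact h
    have e3 : ∑ k ∈ range (m+2), (((m+1).choose k : ℕ):ℝ) * D (k+1) * x^(m+1-k)
        = (∑ k ∈ range (m+2), (((m+1).choose k : ℕ):ℝ) * ((k+1:ℕ):ℝ) * D k * x^(m+1-k))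
          + ∑ k ∈ range (m+2), (((m+1).choose k : ℕ):ℝ) * (-1:ℝ)^(k+1) * a (k+1) * x^(m+1-k) := by
      rw [← Finset.sum_add_distrib]
      apply Finset.sum_congr rfl
      intro k _
      rw [hrec k]
      ring
    have e4 : (∑ k ∈ range (m+2), (((m+1).choose k : ℕ):ℝ) * ((k+1:ℕ):ℝ) * D k * x^(m+1-k))
        - ((m+2:ℕ):ℝ) * Dp (m+1) x = -(((m+1:ℕ):ℝ) * (x * Dp m x)) := by
      rw [hDp, hDp, ← sum_factor D m x, Finset.mul_sum, ← Finset.sum_sub_distrib, ← Finset.sum_neg_distrib]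
      apply Finset.sum_congr rfl
      intro k hk
      have hle : k ≤ m + 1 := Nat.lt_succ_iff.mp (Finset.mem_range.mp hk)
      rw [Nat.cast_sub hle]
      push_cast
      ring
    have ih2 : x * (Dp (m+1) x - ((m+1:ℕ):ℝ) * Dp m x) = x * μ (m+1) x := by rw [ih x]
    push_cast at e1 e2 e3 e4 ih2 ⊢
    linear_combination e1 + e3 + e4 - e2 + ih2
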